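/- arXiv:1505.01364 — 2 statements merged into one kernel-verified Lean document; each statement's English description precedes it below -/
import Mathlib

section
/- Let G be a locally compact group, (Kₙ) an increasing sequence of compact subsets whose interiors cover G, (αₙ) an increasing unbounded sequence of positive reals, and (εₙ) a decreasing null sequence with ∑ αₙεₙ < ∞. Suppose φₙ : G × G → [0,1] are kernels such that |φₙ(x,y) − 1| ≤ εₙ for all (x,y) ∈ Tube(Kₙ), and each φₙ tends to zero off tubes. Then ψ(x,y) = ∑ₙ αₙ(1 − φₙ(x,y)) defines a kernel (the series converges pointwise) which is bounded on every tube and is proper. -/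
def Tube {G : Type*} [Group G] (K : Set G) : Set (G × G) :=
  {p | p.1⁻¹ * p.2 ∈ K}

def IsProperKernel {G : Type*} [Group G] [TopologicalSpace G] (k : G → G → ℝ) : Prop :=
  ∀ R : ℝ, 0 < R → ∃ K : Set G, IsCompact K ∧ {p : G × G | k p.1 p.2 ≤ R} ⊆ Tube K

def BoundedOnTubes {G : Type*} [Group G] [TopologicalSpace G] (k : G → G → ℝ) : Prop :=
  ∀ K : Set G, IsCompact K → ∃ M : ℝ, ∀ p ∈ Tube K, |k p.1 p.2| ≤ M

def TendsToZeroOffTubes {G : Type*} [Group G] [TopologicalSpace G] (k : G → G → ℝ) : Prop :=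
  ∀ ε : ℝ, 0 < ε → ∃ K : Set G, IsCompact K ∧ ∀ p : G × G, p ∉ Tube K → |k p.1 p.2| < ε

theorem sum_of_multipliers_proper_and_bounded
    {G : Type*} [Group G] [TopologicalSpace G] [IsTopologicalGroup G]
    [LocallyCompactSpace G]
    (K : ℕ → Set G) (hKcpt : ∀ n, IsCompact (K n)) (hKmono : Monotone K)
    (hKcover : (⋃ n, interior (K n)) = Set.univ)
    (α : ℕ → ℝ) (hαpos : ∀ n, 0 < α n) (hαmono : Monotone α)
    (hαunbdd : ∀ C : ℝ, ∃ n, C < α n)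
    (ε : ℕ → ℝ) (hεanti : Antitone ε)
    (hεnull : Filter.Tendsto ε Filter.atTop (nhds 0))
    (hsum : Summable (fun n => α n * ε n))
    (φ : ℕ → G → G → ℝ) (hφrange : ∀ n x y, 0 ≤ φ n x y ∧ φ n x y ≤ 1)
    (hφunif : ∀ n, ∀ p ∈ Tube (K n), |φ n p.1 p.2 - 1| ≤ ε n)
    (hφzero : ∀ n, TendsToZeroOffTubes (φ n)) :
    (∀ x y : G, Summable (fun n => α n * (1 - φ n x y))) ∧
    BoundedOnTubes (fun x y => ∑' n, α n * (1 - φ n x y)) ∧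
    IsProperKernel (fun x y => ∑' n, α n * (1 - φ n x y)) := by
  have hnn : ∀ n (x y : G), 0 ≤ α n * (1 - φ n x y) := by
    intro n x y
    have h := (hφrange n x y).2
    nlinarith [hαpos n]
  have hle1 : ∀ n (x y : G), α n * (1 - φ n x y) ≤ α n := by
    intro n x y
    have h := (hφrange n x y).1
    nlinarith [hαpos n]
  have htube : ∀ n (p : G × G), p ∈ Tube (K n) →
      α n * (1 - φ n p.1 p.2) ≤ α n * ε n := by
    intro n p hp
    have h := abs_le.1 (hφunif n p hp)
    have h2 : 1 - φ n p.1 p.2 ≤ ε n := by linarith [h.1]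
    exact mul_le_mul_of_nonneg_left h2 (hαpos n).le
  have hmem : ∀ g : G, ∃ m, g ∈ K m := by
    intro g
    have : g ∈ ⋃ n, interior (K n) := by rw [hKcover]; trivial
    obtain ⟨n, hn⟩ := Set.mem_iUnion.1 this
    exact ⟨n, interior_subset hn⟩
  have hsummable : ∀ x y : G, Summable (fun n => α n * (1 - φ n x y)) := by
    intro x y
    obtain ⟨m, hm⟩ := hmem (x⁻¹ * y)
    rw [← summable_nat_add_iff (f := fun n => α n * (1 - φ n x y)) m]
    exact Summable.of_nonneg_of_le (fun n => hnn _ x y)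
      (fun n => htube (n + m) (x, y) (hKmono (Nat.le_add_left m n) hm))
      ((summable_nat_add_iff (f := fun n => α n * ε n) m).2 hsum)
  refine ⟨hsummable, ?_, ?_⟩
  · intro Kc hKc
    have hcov : Kc ⊆ ⋃ n, interior (K n) := by rw [hKcover]; exact Set.subset_univ _
    obtain ⟨t, ht⟩ := hKc.elim_finite_subcover (fun n => interior (K n))
      (fun n => isOpen_interior) hcov
    obtain ⟨m, hKm⟩ : ∃ m, Kc ⊆ K m := by
      refine ⟨t.sup id, fun g hg => ?_⟩
      obtain ⟨i, hi, hgi⟩ := Set.mem_iUnion₂.1 (ht hg)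
      exact hKmono (Finset.le_sup hi : id i ≤ t.sup id) (interior_subset hgi)
    refine ⟨(∑ n ∈ Finset.range m, α n) + ∑' n, α (n + m) * ε (n + m), ?_⟩
    intro p hp
    have hs := hsummable p.1 p.2
    have hψnn : 0 ≤ ∑' n, α n * (1 - φ n p.1 p.2) :=
      tsum_nonneg (fun n => hnn n p.1 p.2)
    rw [abs_of_nonneg hψnn]
    rw [← Summable.sum_add_tsum_nat_add m hs]
    have h1 : (∑ n ∈ Finset.range m, α n * (1 - φ n p.1 p.2)) ≤
        ∑ n ∈ Finset.range m, α n :=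
      Finset.sum_le_sum (fun n _ => hle1 n p.1 p.2)
    have h2 : (∑' n, α (n + m) * (1 - φ (n + m) p.1 p.2)) ≤
        ∑' n, α (n + m) * ε (n + m) := by
      apply Summable.tsum_le_tsum _
        ((summable_nat_add_iff (f := fun n => α n * (1 - φ n p.1 p.2)) m).2 hs)
        ((summable_nat_add_iff (f := fun n => α n * ε n) m).2 hsum)
      intro n
      exact htube (n + m) p (hKmono (Nat.le_add_left m n) (hKm hp))
    linarith
  · intro R hR
    obtain ⟨n, hn⟩ := hαunbdd (2 * R)
    obtain ⟨K', hK'cpt, hK'⟩ := hφzero n (1/2) (by norm_num)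
    refine ⟨K', hK'cpt, ?_⟩
    intro p hp
    by_contra h
    have hφs : |φ n p.1 p.2| < 1/2 := hK' p h
    have hφlt : φ n p.1 p.2 < 1/2 := lt_of_le_of_lt (le_abs_self _) hφs
    have hterm : R < α n * (1 - φ n p.1 p.2) := by nlinarith [hαpos n]
    have hle : α n * (1 - φ n p.1 p.2) ≤ ∑' k, α k * (1 - φ k p.1 p.2) :=
      Summable.le_tsum (hsummable p.1 p.2) n (fun j _ => hnn j p.1 p.2)
    exact absurd hp (by simp only [Set.mem_setOf_eq]; push_neg; linarith)
end

section
/- Let G be a locally compact group. If there exists a conditionally negative definite kernel h : G × G → ℝ which is proper and bounded on tubes, then G admits a coarse embedding into a real Hilbert space. -/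
def IsCondNegDef {G : Type*} (h : G → G → ℝ) : Prop :=
  (∀ x y, h x y = h y x) ∧ (∀ x, h x x = 0) ∧
  ∀ (n : ℕ) (x : Fin n → G) (c : Fin n → ℝ), (∑ i, c i) = 0 →
    (∑ i, ∑ j, c i * c j * h (x i) (x j)) ≤ 0

def IsCoarseEmbedding {G H : Type*} [Group G] [TopologicalSpace G]
    [NormedAddCommGroup H] (u : G → H) : Prop :=
  (∀ K : Set G, IsCompact K → ∃ R : ℝ, 0 < R ∧ ∀ p ∈ Tube K, ‖u p.1 - u p.2‖ ≤ R) ∧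
  (∀ R : ℝ, 0 < R → ∃ K : Set G, IsCompact K ∧
    ∀ s t : G, ‖u s - u t‖ ≤ R → (s, t) ∈ Tube K)

/-! ### Auxiliary facts about conditionally negative definite kernels -/

section CndFacts

variable {G : Type*}

lemma cnd_nonneg {h : G → G → ℝ} (hcnd : IsCondNegDef h) (x y : G) : 0 ≤ h x y := by
  have := hcnd.2.2 2 ![x, y] ![1, -1] (by simp [Fin.sum_univ_two])
  simp [Fin.sum_univ_two, hcnd.2.1, hcnd.1 y x] at this
  linarith

lemma cnd_sqrt_triangle {h : G → G → ℝ} (hcnd : IsCondNegDef h) (x y z : G) :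
    Real.sqrt (h x z) ≤ Real.sqrt (h x y) + Real.sqrt (h y z) := by
  have key : ∀ t : ℝ, 0 ≤ (h x y) * (t * t) + (h x y + h y z - h x z) * t + h y z := by
    intro t
    have := hcnd.2.2 3 ![x, z, y] ![t, 1, -(t+1)] (by simp [Fin.sum_univ_three])
    simp [Fin.sum_univ_three, hcnd.2.1, hcnd.1 z x, hcnd.1 y x, hcnd.1 z y] at this
    nlinarith [this]
  have hd := discrim_le_zero key
  rw [discrim] at hd
  have ha0 : 0 ≤ h x y := cnd_nonneg hcnd x y
  have hc0 : 0 ≤ h y z := cnd_nonneg hcnd y z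
  have hsa := Real.sq_sqrt ha0
  have hsc := Real.sq_sqrt hc0
  have habs : |h x y + h y z - h x z| ≤ 2 * (Real.sqrt (h x y) * Real.sqrt (h y z)) := by
    rw [← Real.sqrt_sq_eq_abs]
    rw [show (2 : ℝ) * (Real.sqrt (h x y) * Real.sqrt (h y z)) =
      Real.sqrt ((2 * (Real.sqrt (h x y) * Real.sqrt (h y z)))^2) from
        (Real.sqrt_sq (by positivity)).symm]
    apply Real.sqrt_le_sqrt
    nlinarith [hd, hsa, hsc]
  have h1 : h x z ≤ (Real.sqrt (h x y) + Real.sqrt (h y z)) ^ 2 := by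
    have := neg_abs_le (h x y + h y z - h x z)
    nlinarith [habs, hsa, hsc]
  calc Real.sqrt (h x z) ≤ Real.sqrt ((Real.sqrt (h x y) + Real.sqrt (h y z))^2) :=
        Real.sqrt_le_sqrt h1
    _ = _ := Real.sqrt_sq (by positivity)

end CndFacts

/-! ### The GNS construction over a countable index set -/

noncomputable section

namespace CndGNS

variable {G : Type*} [Group G]

/-- The positive-type kernel associated to `h` along the sequence `a`, with a
Kronecker delta added to make it positive definite. -/
def kker (h : G → G → ℝ) (a : ℕ → G) (m n : ℕ) : ℝ :=
  (h (a m) 1 + h (a n) 1 - h (a m) (a n)) / 2 + (if m = n then 1 else 0)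

/-- The bilinear form on finitely supported functions induced by `kker`. -/
def Bform (h : G → G → ℝ) (a : ℕ → G) : (ℕ →₀ ℝ) →ₗ[ℝ] (ℕ →₀ ℝ) →ₗ[ℝ] ℝ :=
  Finsupp.lsum ℝ fun m => LinearMap.smulRight (LinearMap.id : ℝ →ₗ[ℝ] ℝ)
    (Finsupp.lsum ℝ fun n => LinearMap.smulRight (LinearMap.id : ℝ →ₗ[ℝ] ℝ) (kker h a m n))

lemma Bform_apply (h : G → G → ℝ) (a : ℕ → G) (f g : ℕ →₀ ℝ) :
    Bform h a f g = ∑ m ∈ f.support, ∑ n ∈ g.support, f m * g n * kker h a m n := by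
  rw [Bform, Finsupp.lsum_apply, LinearMap.finsupp_sum_apply, Finsupp.sum]
  refine Finset.sum_congr rfl fun m hm => ?_
  rw [LinearMap.smulRight_apply, LinearMap.id_apply, LinearMap.smul_apply,
    Finsupp.lsum_apply, Finsupp.sum, smul_eq_mul, Finset.mul_sum]
  exact Finset.sum_congr rfl fun n hn => by
    rw [LinearMap.smulRight_apply, LinearMap.id_apply, smul_eq_mul]; ring

lemma Bform_single (h : G → G → ℝ) (a : ℕ → G) (m n : ℕ) :
    Bform h a (Finsupp.single m 1) (Finsupp.single n 1) = kker h a m n := by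
  rw [Bform, Finsupp.lsum_single, LinearMap.smulRight_apply, LinearMap.id_apply,
    one_smul, Finsupp.lsum_single, LinearMap.smulRight_apply, LinearMap.id_apply, one_smul]

lemma Bform_self (h : G → G → ℝ) (hcnd : IsCondNegDef h) (a : ℕ → G) (f : ℕ →₀ ℝ) :
    ∑ m ∈ f.support, (f m)^2 ≤ Bform h a f f := by
  classical
  set s := f.support with hs
  set T : ℝ := ∑ m ∈ s, f m with hT
  set P : ℝ := ∑ m ∈ s, f m * h (a m) 1 with hP
  set W : ℝ := ∑ m ∈ s, ∑ n ∈ s, f m * f n * h (a m) (a n) with hW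
  set N := s.card with hN
  set σ : Fin N ≃ s := s.equivFin.symm with hσ
  have conv1 : ∀ F : ℕ → ℝ, ∑ i : Fin N, F ((σ i : ℕ)) = ∑ m ∈ s, F m := by
    intro F
    rw [← Finset.sum_coe_sort s F]
    exact σ.sum_comp (fun y : s => F (y : ℕ))
  set x : Fin (N+1) → G := Fin.cons 1 (fun i => a (σ i)) with hx
  set c : Fin (N+1) → ℝ := Fin.cons (-T) (fun i => f (σ i)) with hc
  have hsum : ∑ i, c i = 0 := by
    rw [hc, Fin.sum_univ_succ]
    simp only [Fin.cons_zero, Fin.cons_succ]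
    rw [conv1 (fun m => f m), ← hT]
    ring
  have hS := hcnd.2.2 (N+1) x c hsum
  have expand : (∑ i, ∑ j, c i * c j * h (x i) (x j)) = W - 2*T*P := by
    rw [hx, hc]
    simp only [Fin.sum_univ_succ, Fin.cons_zero, Fin.cons_succ]
    rw [hcnd.2.1 1]
    have e1 : ∑ j : Fin N, -T * f ((σ j : ℕ)) * h 1 (a ((σ j : ℕ)))
        = ∑ m ∈ s, -T * f m * h 1 (a m) := conv1 (fun m => -T * f m * h 1 (a m))
    have e2 : ∑ i : Fin N, (f ((σ i : ℕ)) * -T * h (a ((σ i : ℕ))) 1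
          + ∑ j : Fin N, f ((σ i : ℕ)) * f ((σ j : ℕ)) * h (a ((σ i : ℕ))) (a ((σ j : ℕ))))
        = ∑ m ∈ s, (f m * -T * h (a m) 1 + ∑ n ∈ s, f m * f n * h (a m) (a n)) := by
      rw [← conv1 (fun m => (f m * -T * h (a m) 1 + ∑ n ∈ s, f m * f n * h (a m) (a n)))]
      refine Finset.sum_congr rfl fun i _ => ?_
      rw [conv1 (fun n => f ((σ i : ℕ)) * f n * h (a ((σ i : ℕ))) (a n))]
    rw [e1, e2, Finset.sum_add_distrib]
    have e3 : ∑ m ∈ s, -T * f m * h 1 (a m) = -T * P := by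
      rw [hP, Finset.mul_sum]
      exact Finset.sum_congr rfl fun m _ => by rw [hcnd.1 1 (a m)]; ring
    have e4 : ∑ m ∈ s, f m * -T * h (a m) 1 = -T * P := by
      rw [hP, Finset.mul_sum]
      exact Finset.sum_congr rfl fun m _ => by ring
    rw [e3, e4, ← hW]
    ring
  have E2 : Bform h a f f = T*P - W/2 + ∑ m ∈ s, (f m)^2 := by
    rw [Bform_apply]
    calc ∑ m ∈ s, ∑ n ∈ s, f m * f n * kker h a m n
        = ∑ m ∈ s, ∑ n ∈ s, ((f m * (h (a m) 1 / 2)) * f n + f m * (f n * (h (a n) 1 / 2))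
            - (f m * f n * h (a m) (a n)) / 2 + (if m = n then f m * f n else 0)) := by
          refine Finset.sum_congr rfl fun m _ => Finset.sum_congr rfl fun n _ => ?_
          rw [kker]; split_ifs <;> ring
      _ = (∑ m ∈ s, f m * (h (a m) 1 / 2)) * (∑ n ∈ s, f n)
          + (∑ m ∈ s, f m) * (∑ n ∈ s, f n * (h (a n) 1 / 2))
          - W / 2 + ∑ m ∈ s, (f m)^2 := by
          simp only [Finset.sum_add_distrib, Finset.sum_sub_distrib]
          congr 1
          · congr 1
            · congr 1
              · rw [← Finset.sum_mul_sum]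
              · rw [← Finset.sum_mul_sum]
            · rw [hW, Finset.sum_div _ _ (2:ℝ)]
              exact Finset.sum_congr rfl fun m _ => (Finset.sum_div _ _ _).symm
          · refine Finset.sum_congr rfl fun m hm => ?_
            rw [Finset.sum_ite_eq s m (fun n => f m * f n), if_pos hm, sq]
      _ = T*P - W/2 + ∑ m ∈ s, (f m)^2 := by
          have : ∑ m ∈ s, f m * (h (a m) 1 / 2) = P / 2 := by
            rw [hP, Finset.sum_div _ _ (2:ℝ)]
            exact Finset.sum_congr rfl fun m _ => by ring
          rw [this, ← hT]
          ring
  rw [expand] at hS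
  linarith [hS, E2.ge, E2.le]

lemma kker_symm (h : G → G → ℝ) (hcnd : IsCondNegDef h) (a : ℕ → G) (m n : ℕ) :
    kker h a m n = kker h a n m := by
  rw [kker, kker, hcnd.1 (a m) (a n)]
  have : (if m = n then (1:ℝ) else 0) = (if n = m then 1 else 0) := by
    by_cases hmn : m = n
    · simp [hmn]
    · simp [hmn, Ne.symm hmn]
  rw [this]
  ring

lemma Bform_comm (h : G → G → ℝ) (hcnd : IsCondNegDef h) (a : ℕ → G) (f g : ℕ →₀ ℝ) :
    Bform h a f g = Bform h a g f := by
  rw [Bform_apply, Bform_apply, Finset.sum_comm]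
  exact Finset.sum_congr rfl fun n _ => Finset.sum_congr rfl fun m _ => by
    rw [kker_symm h hcnd a m n]; ring

lemma Bform_nonneg (h : G → G → ℝ) (hcnd : IsCondNegDef h) (a : ℕ → G) (f : ℕ →₀ ℝ) :
    0 ≤ Bform h a f f :=
  le_trans (Finset.sum_nonneg fun m _ => sq_nonneg _) (Bform_self h hcnd a f)

lemma Bform_definite (h : G → G → ℝ) (hcnd : IsCondNegDef h) (a : ℕ → G) (f : ℕ →₀ ℝ)
    (hf : Bform h a f f = 0) : f = 0 := by
  have h1 : ∑ m ∈ f.support, (f m)^2 ≤ 0 := hf ▸ Bform_self h hcnd a f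
  ext n
  by_cases hn : n ∈ f.support
  · have := (Finset.sum_eq_zero_iff_of_nonneg (fun m _ => sq_nonneg (f m))).mp
      (le_antisymm h1 (Finset.sum_nonneg fun m _ => sq_nonneg _)) n hn
    simpa [sq_eq_zero_iff] using this
  · simpa using Finsupp.notMem_support_iff.mp hn

end CndGNS

/-- The underlying type of the GNS space: a type-0 copy of `ℕ →₀ ℝ`. -/
def GNSSpace : Type := ℕ →₀ ℝ

noncomputable instance : AddCommGroup GNSSpace := inferInstanceAs (AddCommGroup (ℕ →₀ ℝ))
noncomputable instance : Module ℝ GNSSpace := inferInstanceAs (Module ℝ (ℕ →₀ ℝ))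

open CndGNS in
lemma gns_exists {G : Type*} [Group G] (h : G → G → ℝ) (hcnd : IsCondNegDef h) (a : ℕ → G) :
    ∃ (H : Type) (_ : NormedAddCommGroup H) (_ : InnerProductSpace ℝ H)
      (_ : CompleteSpace H) (v : ℕ → H),
      ∀ m n, ‖v m - v n‖ ^ 2 = h (a m) (a n) + (if m = n then 0 else 2) := by
  classical
  letI core : InnerProductSpace.Core ℝ GNSSpace :=
    { inner := fun f g => Bform h a f g
      conj_inner_symm := fun f g => by
        simp only [starRingEnd_apply, star_trivial]
        exact Bform_comm h hcnd a g f
      re_inner_nonneg := fun f => Bform_nonneg h hcnd a f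
      add_left := fun f g k => LinearMap.map_add₂ (Bform h a) f g k
      smul_left := fun f g r => by
        simp only [starRingEnd_apply, star_trivial, map_smul, LinearMap.smul_apply,
          smul_eq_mul]
        exact LinearMap.map_smul₂ (Bform h a) r f g
      definite := fun f hf => Bform_definite h hcnd a f hf }
  letI : NormedAddCommGroup GNSSpace :=
    InnerProductSpace.Core.toNormedAddCommGroup (𝕜 := ℝ) (F := GNSSpace)
  letI : InnerProductSpace ℝ GNSSpace := InnerProductSpace.ofCore core.toCore
  refine ⟨UniformSpace.Completion GNSSpace, inferInstance, inferInstance, inferInstance,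
    fun m => UniformSpace.Completion.coe' (α := GNSSpace) ((Finsupp.single m 1 : ℕ →₀ ℝ) : GNSSpace),
    fun m n => ?_⟩
  erw [← UniformSpace.Completion.coe_sub, UniformSpace.Completion.norm_coe]
  have hinner : ∀ z : GNSSpace, ‖z‖ ^ 2 = Bform h a z z := fun z =>
    (real_inner_self_eq_norm_sq z).symm
  rw [hinner]
  have expand : Bform h a ((Finsupp.single m 1 : ℕ →₀ ℝ) - Finsupp.single n 1)
      ((Finsupp.single m 1 : ℕ →₀ ℝ) - Finsupp.single n 1)
      = kker h a m m + kker h a n n - kker h a m n - kker h a n m := by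
    simp only [map_sub, LinearMap.sub_apply, Bform_single]
    ring
  erw [expand]
  by_cases hmn : m = n
  · subst hmn
    simp [kker, hcnd.2.1]
  · rw [kker, kker, kker, kker, if_pos rfl, if_pos rfl, if_neg hmn, if_neg (Ne.symm hmn),
      hcnd.2.1 (a m), hcnd.2.1 (a n), hcnd.1 (a n) (a m), if_neg hmn]
    ring

end

open scoped Pointwise in
theorem cnd_proper_bounded_gives_coarse_embedding
    {G : Type*} [Group G] [TopologicalSpace G] [IsTopologicalGroup G]
    [LocallyCompactSpace G]
    (h : G → G → ℝ) (hcnd : IsCondNegDef h)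
    (hproper : IsProperKernel h) (hbdd : BoundedOnTubes h) :
    ∃ (H : Type) (_ : NormedAddCommGroup H) (_ : InnerProductSpace ℝ H)
      (_ : CompleteSpace H) (u : G → H), IsCoarseEmbedding u := by
  classical
  have hsym := hcnd.1
  have hpos : ∀ x y : G, 0 ≤ h x y := fun x y => cnd_nonneg hcnd x y
  have htri : ∀ x y z : G, Real.sqrt (h x z) ≤ Real.sqrt (h x y) + Real.sqrt (h y z) :=
    fun x y z => cnd_sqrt_triangle hcnd x y z
  -- a compact neighborhood of the identity
  obtain ⟨U, hUc, hU1⟩ := exists_compact_mem_nhds (1 : G)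
  obtain ⟨M₀, hM₀⟩ := hbdd U hUc
  set M : ℝ := max M₀ 0 with hMdef
  have hM0 : (0:ℝ) ≤ M := le_max_right _ _
  have hM : ∀ x y : G, x⁻¹ * y ∈ U → h x y ≤ M := by
    intro x y hxy
    exact le_trans (le_trans (le_abs_self _) (hM₀ (x, y) hxy)) (le_max_left _ _)
  -- σ-compact exhaustion coming from properness
  have hKex : ∀ n : ℕ, ∃ K : Set G, IsCompact K ∧ {p : G × G | h p.1 p.2 ≤ n + 1} ⊆ Tube K :=
    fun n => hproper (n + 1) (by positivity)
  choose K hKc hKs using hKex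
  -- cover each compact piece by finitely many translates of `interior U`
  have hcov : ∀ n : ℕ, ∃ F : Finset G, K n ⊆ ⋃ z ∈ F, z • interior U := by
    intro n
    apply (hKc n).elim_finite_subcover (fun z : G => z • interior U)
      (fun z => isOpen_interior.smul z)
    intro y hy
    refine Set.mem_iUnion.mpr ⟨y, ?_⟩
    rw [Set.mem_smul_set_iff_inv_smul_mem]
    simpa using mem_interior_iff_mem_nhds.mpr hU1
  choose F hF using hcov
  -- a countable set of centers
  set D : Set G := {1} ∪ ⋃ n, (F n : Set G) with hD
  have hDc : D.Countable :=
    (Set.countable_singleton 1).union (Set.countable_iUnion fun n => (F n).countable_toSet)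
  obtain ⟨a, ha⟩ := hDc.exists_eq_range ⟨1, Or.inl rfl⟩
  -- every point of G is close to a center
  have hnet : ∀ x : G, ∃ m : ℕ, h x (a m) ≤ M := by
    intro x
    have hx : x ∈ K (Nat.ceil (h 1 x)) := by
      have h1 : h 1 x ≤ (Nat.ceil (h 1 x) : ℝ) + 1 := le_trans (Nat.le_ceil _) (by linarith)
      have h2 := hKs (Nat.ceil (h 1 x)) (Set.mem_setOf.mpr h1 : ((1:G), x) ∈ _)
      simpa [Tube] using h2
    obtain ⟨z, hz, hxz⟩ := Set.mem_iUnion₂.mp (hF _ hx)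
    have hzD : z ∈ D := Or.inr (Set.mem_iUnion.mpr ⟨_, hz⟩)
    rw [ha] at hzD
    obtain ⟨m, rfl⟩ := hzD
    refine ⟨m, ?_⟩
    have hmem : (a m)⁻¹ * x ∈ U := by
      have := Set.mem_smul_set_iff_inv_smul_mem.mp hxz
      simpa [smul_eq_mul] using interior_subset this
    rw [hsym x (a m)]
    exact hM _ _ hmem
  choose ψ hψ using hnet
  -- the GNS space
  obtain ⟨H, i1, i2, i3, v, hv⟩ := gns_exists h hcnd a
  refine ⟨H, i1, i2, i3, fun x => v (ψ x), ?_, ?_⟩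
  · -- upper control
    intro Kc hKcc
    obtain ⟨MK₀, hMK₀⟩ := hbdd Kc hKcc
    set MK : ℝ := max MK₀ 0 with hMKdef
    have hMK0 : (0:ℝ) ≤ MK := le_max_right _ _
    refine ⟨2 * Real.sqrt M + Real.sqrt MK + Real.sqrt 2 + 1, by positivity, ?_⟩
    rintro ⟨s, t⟩ hp
    have hst : h s t ≤ MK :=
      le_trans (le_trans (le_abs_self _) (hMK₀ (s, t) hp)) (le_max_left _ _)
    have hA : Real.sqrt (h (a (ψ s)) (a (ψ t))) ≤ 2 * Real.sqrt M + Real.sqrt MK := by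
      have t1 : Real.sqrt (h (a (ψ s)) (a (ψ t)))
          ≤ Real.sqrt (h (a (ψ s)) s) + Real.sqrt (h s t) + Real.sqrt (h t (a (ψ t))) := by
        calc Real.sqrt (h (a (ψ s)) (a (ψ t)))
            ≤ Real.sqrt (h (a (ψ s)) s) + Real.sqrt (h s (a (ψ t))) := htri _ s _
          _ ≤ Real.sqrt (h (a (ψ s)) s) + (Real.sqrt (h s t) + Real.sqrt (h t (a (ψ t)))) :=
              add_le_add_right (htri s t _) _
          _ = _ := by ring
      have b1 : Real.sqrt (h (a (ψ s)) s) ≤ Real.sqrt M := by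
        apply Real.sqrt_le_sqrt
        rw [← hsym s (a (ψ s))]
        exact hψ s
      have b2 : Real.sqrt (h t (a (ψ t))) ≤ Real.sqrt M := Real.sqrt_le_sqrt (hψ t)
      have b3 : Real.sqrt (h s t) ≤ Real.sqrt MK := Real.sqrt_le_sqrt hst
      linarith
    -- conclude
    have hnorm2 : ‖v (ψ s) - v (ψ t)‖ ^ 2
        ≤ (2 * Real.sqrt M + Real.sqrt MK + Real.sqrt 2) ^ 2 := by
      rw [hv (ψ s) (ψ t)]
      have hAA : h (a (ψ s)) (a (ψ t)) ≤ (2 * Real.sqrt M + Real.sqrt MK) ^ 2 := by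
        have := Real.sq_sqrt (hpos (a (ψ s)) (a (ψ t)))
        nlinarith [hA, Real.sqrt_nonneg (h (a (ψ s)) (a (ψ t)))]
      have hite : (if ψ s = ψ t then (0:ℝ) else 2) ≤ 2 := by split_ifs <;> norm_num
      have hsq2 : Real.sqrt 2 ^ 2 = 2 := Real.sq_sqrt (by norm_num)
      nlinarith [Real.sqrt_nonneg M, Real.sqrt_nonneg MK, Real.sqrt_nonneg 2]
    have hnn : (0:ℝ) ≤ 2 * Real.sqrt M + Real.sqrt MK + Real.sqrt 2 := by positivity
    have hnorm : ‖v (ψ s) - v (ψ t)‖ ≤ 2 * Real.sqrt M + Real.sqrt MK + Real.sqrt 2 := by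
      have hmono := Real.sqrt_le_sqrt hnorm2
      rwa [Real.sqrt_sq (norm_nonneg _), Real.sqrt_sq hnn] at hmono
    show ‖v (ψ s) - v (ψ t)‖ ≤ 2 * Real.sqrt M + Real.sqrt MK + Real.sqrt 2 + 1
    linarith
  · -- lower control
    intro R hR
    obtain ⟨Kc, hKcc, hKcs⟩ := hproper ((2 * Real.sqrt M + R) ^ 2 + 1) (by positivity)
    refine ⟨Kc, hKcc, fun s t hle => ?_⟩
    apply hKcs
    show h s t ≤ (2 * Real.sqrt M + R) ^ 2 + 1
    have key : Real.sqrt (h s t) ≤ 2 * Real.sqrt M + R := by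
      have hvlow : Real.sqrt (h (a (ψ s)) (a (ψ t))) ≤ ‖v (ψ s) - v (ψ t)‖ := by
        have h2 := hv (ψ s) (ψ t)
        have hle2 : h (a (ψ s)) (a (ψ t)) ≤ ‖v (ψ s) - v (ψ t)‖ ^ 2 := by
          rw [h2]; split_ifs <;> norm_num
        calc Real.sqrt (h (a (ψ s)) (a (ψ t))) ≤ Real.sqrt (‖v (ψ s) - v (ψ t)‖ ^ 2) :=
              Real.sqrt_le_sqrt hle2
          _ = ‖v (ψ s) - v (ψ t)‖ := Real.sqrt_sq (norm_nonneg _)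
      have t1 : Real.sqrt (h s t)
          ≤ Real.sqrt (h s (a (ψ s))) + Real.sqrt (h (a (ψ s)) (a (ψ t)))
            + Real.sqrt (h (a (ψ t)) t) := by
        calc Real.sqrt (h s t) ≤ Real.sqrt (h s (a (ψ s))) + Real.sqrt (h (a (ψ s)) t) :=
              htri _ _ _
          _ ≤ Real.sqrt (h s (a (ψ s)))
              + (Real.sqrt (h (a (ψ s)) (a (ψ t))) + Real.sqrt (h (a (ψ t)) t)) :=
              add_le_add_right (htri _ _ _) _
          _ = _ := by ring
      have b1 : Real.sqrt (h s (a (ψ s))) ≤ Real.sqrt M := Real.sqrt_le_sqrt (hψ s)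
      have b2 : Real.sqrt (h (a (ψ t)) t) ≤ Real.sqrt M := by
        apply Real.sqrt_le_sqrt
        rw [hsym (a (ψ t)) t]
        exact hψ t
      linarith [hvlow.trans hle]
    have := Real.sq_sqrt (hpos s t)
    nlinarith [key, Real.sqrt_nonneg (h s t)]
end
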